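/- If the initial state satisfies s > d0, then the 'do nothing' action is optimal at the first step: for all H and all budgets b, V (H+1) s b = r + V H (s - d0) b. Equivalently, when b > 0 and s > d0, V H (s - d0) b ≥ V H s_max (b - 1). -/

import Mathlib

noncomputable def V (smax d0 : ℕ) (r : ℝ) : ℕ → ℕ → ℕ → ℝ
  | 0, s, _ => if 0 < s then r else 0
  | (H+1), s, b =>
      if s = 0 then 0
      else r + (if 0 < b then max (V smax d0 r H (s - d0) b) (V smax d0 r H smax (b - 1))
                else V smax d0 r H (s - d0) b)

lemma V_nonneg (smax d0 : ℕ) (r : ℝ) (hr : 0 < r) :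
    ∀ H s b, 0 ≤ V smax d0 r H s b := by
  intro H
  induction H with
  | zero => intro s b; simp only [V]; split <;> [exact hr.le; rfl]
  | succ H ih =>
      intro s b
      simp only [V]
      split
      · rfl
      · split
        · have := ih (s - d0) b
          positivity
        · have := ih (s - d0) b
          positivity

lemma V_mono_s (smax d0 : ℕ) (r : ℝ) (hr : 0 < r) :
    ∀ H s s' b, s ≤ s' → V smax d0 r H s b ≤ V smax d0 r H s' b := by
  intro H
  induction H with
  | zero =>
      intro s s' b hss
      simp only [V]
      split
      · rw [if_pos (lt_of_lt_of_le (by assumption) hss)]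
      · split <;> [exact hr.le; rfl]
  | succ H ih =>
      intro s s' b hss
      simp only [V]
      by_cases hs : s = 0
      · rw [if_pos hs]
        split
        · rfl
        · split
          · have h1 := V_nonneg smax d0 r hr H (s' - d0) b
            have h2 := V_nonneg smax d0 r hr H smax (b - 1)
            have := le_max_left (V smax d0 r H (s' - d0) b) (V smax d0 r H smax (b - 1))
            have h4 := le_max_left (V smax d0 r H (s' - d0) b) (V smax d0 r H smax (b - 1))
            linarith
          · have := V_nonneg smax d0 r hr H (s' - d0) b
            linarith
      · rw [if_neg hs, if_neg (by omega : ¬ s' = 0)]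
        have hsub : s - d0 ≤ s' - d0 := Nat.sub_le_sub_right hss d0
        split
        · exact add_le_add le_rfl (max_le_max (ih _ _ _ hsub) le_rfl)
        · exact add_le_add le_rfl (ih _ _ _ hsub)

lemma V_mono_b (smax d0 : ℕ) (r : ℝ) (hr : 0 < r) :
    ∀ H s b b', b ≤ b' → V smax d0 r H s b ≤ V smax d0 r H s b' := by
  intro H
  induction H with
  | zero => intro s b b' _; simp [V]
  | succ H ih =>
      intro s b b' hbb
      simp only [V]
      split
      · rfl
      · by_cases hb : 0 < b
        · rw [if_pos hb, if_pos (lt_of_lt_of_le hb hbb)]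
          exact add_le_add le_rfl (max_le_max (ih _ _ _ hbb) (ih _ _ _ (by omega)))
        · rw [if_neg hb]
          split
          · exact add_le_add le_rfl (le_max_of_le_left (ih _ _ _ hbb))
          · exact add_le_add le_rfl (ih _ _ _ hbb)

lemma V_key (smax d0 : ℕ) (hsmax : 0 < smax) (hd0 : 0 < d0) (hds : d0 ≤ smax)
    (r : ℝ) (hr : 0 < r) :
    ∀ H s b, 0 < s → 0 < b → V smax d0 r H smax (b - 1) ≤ V smax d0 r H s b := by
  intro H
  induction H with
  | zero =>
      intro s b hs _
      simp only [V, if_pos hs, if_pos hsmax, le_refl]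
  | succ H ih =>
      intro s b hs hb
      simp only [V, if_neg (by omega : ¬ smax = 0), if_neg (by omega : ¬ s = 0),
        if_pos hb]
      by_cases hb1 : 0 < b - 1
      · rw [if_pos hb1]
        have h1 : V smax d0 r H (smax - d0) (b - 1) ≤ V smax d0 r H smax (b - 1) :=
          V_mono_s smax d0 r hr H _ _ _ (Nat.sub_le _ _)
        have h2 : V smax d0 r H smax (b - 1 - 1) ≤ V smax d0 r H smax (b - 1) :=
          V_mono_b smax d0 r hr H _ _ _ (Nat.sub_le _ _)
        have h3 : V smax d0 r H smax (b - 1) ≤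
            max (V smax d0 r H (s - d0) b) (V smax d0 r H smax (b - 1)) :=
          le_max_right _ _
        have : max (V smax d0 r H (smax - d0) (b-1)) (V smax d0 r H smax (b-1-1)) ≤
            V smax d0 r H smax (b - 1) := max_le h1 h2
        linarith
      · rw [if_neg hb1]
        have h1 : V smax d0 r H (smax - d0) (b - 1) ≤ V smax d0 r H smax (b - 1) :=
          V_mono_s smax d0 r hr H _ _ _ (Nat.sub_le _ _)
        have h3 : V smax d0 r H smax (b - 1) ≤
            max (V smax d0 r H (s - d0) b) (V smax d0 r H smax (b - 1)) :=
          le_max_right _ _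
        linarith

theorem stmt3 (smax d0 : ℕ) (hsmax : 0 < smax) (hd0 : 0 < d0) (hds : d0 ≤ smax)
    (r : ℝ) (hr : 0 < r) :
    (∀ H s b, d0 < s → V smax d0 r (H + 1) s b = r + V smax d0 r H (s - d0) b) ∧
    (∀ H s b, d0 < s → 0 < b → V smax d0 r H smax (b - 1) ≤ V smax d0 r H (s - d0) b) := by
  have key : ∀ H s b, d0 < s → 0 < b →
      V smax d0 r H smax (b - 1) ≤ V smax d0 r H (s - d0) b := by
    intro H s b hds' hb
    exact V_key smax d0 hsmax hd0 hds r hr H (s - d0) b (by omega) hb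
  refine ⟨?_, key⟩
  intro H s b hs
  simp only [V, if_neg (by omega : ¬ s = 0)]
  by_cases hb : 0 < b
  · rw [if_pos hb, max_eq_left (key H s b hs hb)]
  · rw [if_neg hb]
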